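/- arXiv:2104.07159 — 3 statements merged into one kernel-verified Lean document; each statement's English description precedes it below -/
import Mathlib

section
/- For every closed-subcontext S of a finite formal context K, the concept lattice B(S) is a sublattice of B(K): it is a subset of the concepts of K closed under the binary join and meet operations of B(K). -/
variable {G M : Type*} [Fintype G] [Fintype M]

/-- Attribute derivation A' of an object set A w.r.t. incidence I. -/
def extDerivFCA (I : Set (G × M)) (A : Set G) : Set M := {m | ∀ g ∈ A, (g, m) ∈ I}

/-- Object derivation B' of an attribute set B w.r.t. incidence I. -/
def intDeriv (I : Set (G × M)) (B : Set M) : Set G := {g | ∀ m ∈ B, (g, m) ∈ I}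

/-- (A,B) is a formal concept of (G,M,I). -/
def IsConcept (I : Set (G × M)) (A : Set G) (B : Set M) : Prop :=
  extDerivFCA I A = B ∧ intDeriv I B = A

/-- Derivation of an object set inside the (sub)context (H,N,J). -/
def subExtDeriv (N : Set M) (J : Set (G × M)) (A : Set G) : Set M :=
  {n ∈ N | ∀ g ∈ A, (g, n) ∈ J}

/-- Derivation of an attribute set inside the (sub)context (H,N,J). -/
def subIntDeriv (H : Set G) (J : Set (G × M)) (B : Set M) : Set G :=
  {h ∈ H | ∀ n ∈ B, (h, n) ∈ J}

/-- (A,B) is a formal concept of the context (H,N,J). -/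
def IsSubConcept (H : Set G) (N : Set M) (J : Set (G × M)) (A : Set G) (B : Set M) : Prop :=
  A ⊆ H ∧ B ⊆ N ∧ subExtDeriv N J A = B ∧ subIntDeriv H J B = A

/-- (H,N,J) is a closed-subcontext of (G,M,I). -/
def IsClosedSubcontext (I : Set (G × M)) (H : Set G) (N : Set M) (J : Set (G × M)) : Prop :=
  J ⊆ I ∩ H ×ˢ N ∧ ∀ A B, IsSubConcept H N J A B → IsConcept I A B

/-- Binary join in the concept lattice of (G,M,I). -/
def conceptJoin (I : Set (G × M)) (c d : Set G × Set M) : Set G × Set M :=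
  (intDeriv I (c.2 ∩ d.2), c.2 ∩ d.2)

/-- Binary meet in the concept lattice of (G,M,I). -/
def conceptMeet (I : Set (G × M)) (c d : Set G × Set M) : Set G × Set M :=
  (c.1 ∩ d.1, extDerivFCA I (c.1 ∩ d.1))

/-- S is a sublattice of the concept lattice of (G,M,I). -/
def IsConceptSublattice (I : Set (G × M)) (S : Set (Set G × Set M)) : Prop :=
  S.Nonempty ∧ (∀ c ∈ S, IsConcept I c.1 c.2) ∧
    ∀ c ∈ S, ∀ d ∈ S, conceptJoin I c d ∈ S ∧ conceptMeet I c d ∈ S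

/-- Image of the concept set of the subcontext [H,N] under φ₁(A,B)=(A'',A'). -/
def phi1Image (I : Set (G × M)) (H : Set G) (N : Set M) : Set (Set G × Set M) :=
  {c | ∃ A B, IsSubConcept H N (I ∩ H ×ˢ N) A B ∧
      c = (intDeriv I (extDerivFCA I A), extDerivFCA I A)}

/-- Image of the concept set of the subcontext [H,N] under φ₂(A,B)=(B',B''). -/
def phi2Image (I : Set (G × M)) (H : Set G) (N : Set M) : Set (Set G × Set M) :=
  {c | ∃ A B, IsSubConcept H N (I ∩ H ×ˢ N) A B ∧
      c = (intDeriv I B, extDerivFCA I (intDeriv I B))}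

/-- [H,N] is (isomorphic to) a contranominal scale of dimension k in (G,M,I). -/
def IsContranominal (I : Set (G × M)) (k : ℕ) (H : Set G) (N : Set M) : Prop :=
  ∃ f : Fin k → G, ∃ g : Fin k → M, Function.Injective f ∧ Function.Injective g ∧
    H = Set.range f ∧ N = Set.range g ∧ ∀ i j, (f i, g j) ∈ I ↔ i ≠ j

/-- O is a minimal object generator of the concept with extent A. -/
def IsMinObjGen (I : Set (G × M)) (A : Set G) (O : Set G) : Prop :=
  intDeriv I (extDerivFCA I O) = A ∧ ∀ P ⊂ O, intDeriv I (extDerivFCA I P) ≠ A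

/-- Q is a minimal attribute generator of the concept with intent B. -/
def IsMinAttGen (I : Set (G × M)) (B : Set M) (Q : Set M) : Prop :=
  extDerivFCA I (intDeriv I Q) = B ∧ ∀ P ⊂ Q, extDerivFCA I (intDeriv I P) ≠ B

/-- Union of all minimal object generators of the atoms of a Boolean suborder
given by an order embedding f of the powerset of Fin k. -/
def genH (I : Set (G × M)) {k : ℕ} (f : Set (Fin k) → Set G × Set M) : Set G :=
  {g | ∃ i : Fin k, ∃ O : Set G, IsMinObjGen I (f {i}).1 O ∧ g ∈ O}

/-- Union of all minimal attribute generators of the coatoms of a Boolean suborder. -/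
def genN (I : Set (G × M)) {k : ℕ} (f : Set (Fin k) → Set G × Set M) : Set M :=
  {m | ∃ i : Fin k, ∃ Q : Set M, IsMinAttGen I (f {i}ᶜ).2 Q ∧ m ∈ Q}


lemma subE_anti (N : Set M) (J : Set (G × M)) {A A' : Set G} (h : A ⊆ A') :
    subExtDeriv N J A' ⊆ subExtDeriv N J A :=
  fun n hn => ⟨hn.1, fun g hg => hn.2 g (h hg)⟩

lemma subI_anti (H : Set G) (J : Set (G × M)) {B B' : Set M} (h : B ⊆ B') :
    subIntDeriv H J B' ⊆ subIntDeriv H J B :=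
  fun g hg => ⟨hg.1, fun n hn => hg.2 n (h hn)⟩

lemma subset_IE (N : Set M) (J : Set (G × M)) {H : Set G} {A : Set G} (hA : A ⊆ H) :
    A ⊆ subIntDeriv H J (subExtDeriv N J A) :=
  fun g hg => ⟨hA hg, fun _ hn => hn.2 g hg⟩

lemma subset_EI (H : Set G) (J : Set (G × M)) {N : Set M} {B : Set M} (hB : B ⊆ N) :
    B ⊆ subExtDeriv N J (subIntDeriv H J B) :=
  fun n hn => ⟨hB hn, fun _ hg => hg.2 n hn⟩

theorem stmt1 (I : Set (G × M)) (H : Set G) (N : Set M) (J : Set (G × M))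
    (h : IsClosedSubcontext I H N J) :
    IsConceptSublattice I {c | IsSubConcept H N J c.1 c.2} := by
  refine ⟨?_, fun c hc => h.2 c.1 c.2 hc, fun c hc d hd => ?_⟩
  · -- the top concept of S
    refine ⟨(subIntDeriv H J (subExtDeriv N J H), subExtDeriv N J H), ?_⟩
    refine ⟨fun g hg => hg.1, fun n hn => hn.1, ?_, rfl⟩
    exact Set.Subset.antisymm
      (subE_anti N J (subset_IE N J (Set.Subset.refl H)))
      (subset_EI H J (fun n hn => hn.1))
  · obtain ⟨hAH, hBN, heA, hiB⟩ := hc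
    obtain ⟨hCH, hDN, heC, hiD⟩ := hd
    constructor
    · -- join
      have hBDN : c.2 ∩ d.2 ⊆ N := fun n hn => hBN hn.1
      have h1 : c.1 ⊆ subIntDeriv H J (c.2 ∩ d.2) :=
        hiB ▸ subI_anti H J Set.inter_subset_left
      have h2 : d.1 ⊆ subIntDeriv H J (c.2 ∩ d.2) :=
        hiD ▸ subI_anti H J Set.inter_subset_right
      have heq : subExtDeriv N J (subIntDeriv H J (c.2 ∩ d.2)) = c.2 ∩ d.2 := by
        refine Set.Subset.antisymm ?_ (subset_EI H J hBDN)
        intro n hn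
        exact ⟨heA ▸ subE_anti N J h1 hn, heC ▸ subE_anti N J h2 hn⟩
      have hsc : IsSubConcept H N J (subIntDeriv H J (c.2 ∩ d.2)) (c.2 ∩ d.2) :=
        ⟨fun g hg => hg.1, hBDN, heq, rfl⟩
      have hK := h.2 _ _ hsc
      have : conceptJoin I c d = (subIntDeriv H J (c.2 ∩ d.2), c.2 ∩ d.2) := by
        simp [conceptJoin, hK.2]
      rw [Set.mem_setOf_eq, this]
      exact hsc
    · -- meet
      have hACH : c.1 ∩ d.1 ⊆ H := fun g hg => hAH hg.1
      have h1 : c.2 ⊆ subExtDeriv N J (c.1 ∩ d.1) :=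
        heA ▸ subE_anti N J Set.inter_subset_left
      have h2 : d.2 ⊆ subExtDeriv N J (c.1 ∩ d.1) :=
        heC ▸ subE_anti N J Set.inter_subset_right
      have heq : subIntDeriv H J (subExtDeriv N J (c.1 ∩ d.1)) = c.1 ∩ d.1 := by
        refine Set.Subset.antisymm ?_ (subset_IE N J hACH)
        intro g hg
        exact ⟨hiB ▸ subI_anti H J h1 hg, hiD ▸ subI_anti H J h2 hg⟩
      have hsc : IsSubConcept H N J (c.1 ∩ d.1) (subExtDeriv N J (c.1 ∩ d.1)) :=
        ⟨hACH, fun n hn => hn.1, rfl, heq⟩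
      have hK := h.2 _ _ hsc
      have : conceptMeet I c d = (c.1 ∩ d.1, subExtDeriv N J (c.1 ∩ d.1)) := by
        simp [conceptMeet, hK.1]
      rw [Set.mem_setOf_eq, this]
      exact hsc
end

section
/- A subcontext S = (H, N, J) (with J ⊆ I) is a closed-subcontext of the finite formal context K = (G, M, I) if and only if for every X ⊆ H one has X^{JJ} ⊇ X^{JI} and for every X ⊆ N one has X^{JJ} ⊇ X^{JI}, where X^J denotes derivation with respect to J and X^{JI} means first deriving with J, then with I. -/
variable {G M : Type*} [Fintype G] [Fintype M]

theorem stmt4 (I : Set (G × M)) (H : Set G) (N : Set M) (J : Set (G × M))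
    (hJ : J ⊆ I ∩ H ×ˢ N) :
    IsClosedSubcontext I H N J ↔
      ((∀ X ⊆ H, intDeriv I (subExtDeriv N J X) ⊆ subIntDeriv H J (subExtDeriv N J X)) ∧
       (∀ X ⊆ N, extDerivFCA I (subIntDeriv H J X) ⊆ subExtDeriv N J (subIntDeriv H J X))) := by
  constructor
  · rintro ⟨-, hcon⟩
    constructor
    · intro X hX
      set B := subExtDeriv N J X with hB
      set A := subIntDeriv H J B with hA
      have hXA : X ⊆ A := fun g hg => ⟨hX hg, fun m hm => hm.2 g hg⟩
      have hsub : IsSubConcept H N J A B := by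
        refine ⟨fun g hg => hg.1, fun n hn => hn.1, ?_, rfl⟩
        ext n
        constructor
        · rintro ⟨hnN, h⟩
          exact ⟨hnN, fun g hg => h g (hXA hg)⟩
        · rintro ⟨hnN, h⟩
          exact ⟨hnN, fun g hg => hg.2 n ⟨hnN, h⟩⟩
      rw [(hcon A B hsub).2]
    · intro X hX
      set A := subIntDeriv H J X with hA
      set B := subExtDeriv N J A with hB
      have hXB : X ⊆ B := fun n hn => ⟨hX hn, fun g hg => hg.2 n hn⟩
      have hsub : IsSubConcept H N J A B := by
        refine ⟨fun g hg => hg.1, fun n hn => hn.1, rfl, ?_⟩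
        ext g
        constructor
        · rintro ⟨hgH, h⟩
          exact ⟨hgH, fun n hn => h n (hXB hn)⟩
        · rintro ⟨hgH, h⟩
          exact ⟨hgH, fun n hn => hn.2 g ⟨hgH, h⟩⟩
      rw [(hcon A B hsub).1]
  · rintro ⟨h1, h2⟩
    refine ⟨hJ, ?_⟩
    rintro A B ⟨hAH, hBN, hAB, hBA⟩
    have hJI : ∀ p ∈ J, p ∈ I := fun p hp => (hJ hp).1
    constructor
    · apply Set.Subset.antisymm
      · have h := h2 B hBN
        rw [hBA, hAB] at h
        exact h
      · intro n hn g hg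
        exact hJI _ ((hAB ▸ hn : n ∈ subExtDeriv N J A).2 g hg)
    · apply Set.Subset.antisymm
      · have h := h1 A hAH
        rw [hAB, hBA] at h
        exact h
      · intro g hg n hn
        exact hJI _ ((hBA ▸ hg : g ∈ subIntDeriv H J B).2 n hn)
end

section
/- Let (A, B) ≤ (C, D) be two formal concepts of a finite formal context K = (G, M, I). Then (C, B, (A × B) ∪ (C × D)) is a closed-subcontext of K whose concept lattice is exactly {(A,B), (C,D)}. -/
variable {G M : Type*} [Fintype G] [Fintype M]

theorem stmt7 (I : Set (G × M)) (A C : Set G) (B D : Set M)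
    (h1 : IsConcept I A B) (h2 : IsConcept I C D) (hle : A ⊆ C) :
    IsClosedSubcontext I C B (A ×ˢ B ∪ C ×ˢ D) ∧
      ∀ E F, IsSubConcept C B (A ×ˢ B ∪ C ×ˢ D) E F ↔ (E = A ∧ F = B) ∨ (E = C ∧ F = D) := by
  obtain ⟨hAB, hBA⟩ := h1
  obtain ⟨hCD, hDC⟩ := h2
  set J : Set (G × M) := A ×ˢ B ∪ C ×ˢ D with hJ
  -- basic facts
  have hDB : D ⊆ B := by
    intro n hn
    rw [← hAB]; rw [← hCD] at hn
    exact fun g hg => hn g (hle hg)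
  have hABI : ∀ g ∈ A, ∀ n ∈ B, (g, n) ∈ I := by
    intro g hg n hn
    rw [← hBA] at hg; exact hg n hn
  have hCDI : ∀ g ∈ C, ∀ n ∈ D, (g, n) ∈ I := by
    intro g hg n hn
    rw [← hDC] at hg; exact hg n hn
  -- L2 : A' = B in subcontext
  have L2 : subExtDeriv B J A = B := by
    ext n
    constructor
    · exact fun h => h.1
    · intro hn
      exact ⟨hn, fun g hg => Or.inl ⟨hg, hn⟩⟩
  -- L1 : B' = A in subcontext
  have L1 : subIntDeriv C J B = A := by
    ext g
    constructor
    · rintro ⟨hgC, hg⟩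
      by_cases hgA : g ∈ A
      · exact hgA
      · have hBD : B ⊆ D := by
          intro n hn
          rcases hg n hn with ⟨h', _⟩ | ⟨_, h'⟩
          · exact absurd h' hgA
          · exact h'
        have hBD' : B = D := le_antisymm hBD hDB
        have : A = C := by rw [← hBA, hBD', hDC]
        rw [this]; exact hgC
    · intro hgA
      exact ⟨hle hgA, fun n hn => Or.inl ⟨hgA, hn⟩⟩
  -- L3 : C' = D in subcontext
  have L3 : subExtDeriv B J C = D := by
    ext n
    constructor
    · rintro ⟨hnB, hn⟩
      by_cases hnD : n ∈ D
      · exact hnD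
      · have hCA : C ⊆ A := by
          intro g hg
          rcases hn g hg with ⟨h', _⟩ | ⟨_, h'⟩
          · exact h'
          · exact absurd h' hnD
        have hCA' : C = A := le_antisymm hCA hle
        have : D = B := by rw [← hCD, hCA', hAB]
        rw [this]; exact hnB
    · intro hnD
      exact ⟨hDB hnD, fun g hg => Or.inr ⟨hg, hnD⟩⟩
  -- L4 : D' = C in subcontext
  have L4 : subIntDeriv C J D = C := by
    ext g
    constructor
    · exact fun h => h.1
    · intro hg
      exact ⟨hg, fun n hn => Or.inr ⟨hg, hn⟩⟩
  have main : ∀ E F, IsSubConcept C B J E F ↔ (E = A ∧ F = B) ∨ (E = C ∧ F = D) := by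
    intro E F
    constructor
    · rintro ⟨hEC, hFB, hext, hint⟩
      by_cases hEA : E ⊆ A
      · left
        have hFeqB : F = B := by
          apply le_antisymm hFB
          intro n hn
          rw [← hext]
          exact ⟨hn, fun g hg => Or.inl ⟨hEA hg, hn⟩⟩
        refine ⟨?_, hFeqB⟩
        rw [← hint, hFeqB, L1]
      · right
        obtain ⟨g0, hg0E, hg0A⟩ := Set.not_subset.mp hEA
        have hFeqD : F = D := by
          apply le_antisymm
          · intro n hn
            rw [← hext] at hn
            rcases hn.2 g0 hg0E with ⟨h', _⟩ | ⟨_, h'⟩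
            · exact absurd h' hg0A
            · exact h'
          · intro n hn
            rw [← hext]
            exact ⟨hDB hn, fun g hg => Or.inr ⟨hEC hg, hn⟩⟩
        refine ⟨?_, hFeqD⟩
        rw [← hint, hFeqD, L4]
    · rintro (⟨hE, hF⟩ | ⟨hE, hF⟩) <;> subst hE <;> subst hF
      · exact ⟨hle, le_refl _, L2, L1⟩
      · exact ⟨le_refl _, hDB, L3, L4⟩
  refine ⟨⟨?_, ?_⟩, main⟩
  · rintro ⟨g, n⟩ (⟨hg, hn⟩ | ⟨hg, hn⟩)
    · exact ⟨hABI g hg n hn, hle hg, hn⟩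
    · exact ⟨hCDI g hg n hn, hg, hDB hn⟩
  · intro E F hEF
    rcases (main E F).mp hEF with ⟨hE, hF⟩ | ⟨hE, hF⟩ <;> subst hE <;> subst hF
    · exact ⟨hAB, hBA⟩
    · exact ⟨hCD, hDC⟩
end
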